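/- Let G be a cactus graph with basic 5-cycle on y1,y4,y2,y3,y5 (cyclic order, y3,y4,y5 of degree 2), with T, T_1, T_2 as above. Suppose S1 = {y2,y4,y5} ∪ U1 ∪ U2 and S2 = {y1,y3,y4} ∪ V1 ∪ V2 are vertex covers of G, where U_a, V_a ⊆ T_a for a = 1,2. Then W1 = {y3,y4,y5} ∪ U1 ∪ V2 and W2 = {y1,y2,y3} ∪ V1 ∪ U2 are also vertex covers of G. -/

import Mathlib

/-- `C` is a vertex cover of `G`: every edge has at least one endpoint in `C`. -/
def IsVC {V : Type*} (G : SimpleGraph V) (C : Set V) : Prop :=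
  ∀ ⦃u v : V⦄, G.Adj u v → u ∈ C ∨ v ∈ C

/-- The graph obtained from `G` by deleting the vertices in `s` (keeping the ambient
vertex type): the induced subgraph of `G` on `V(G) \ s`. -/
def delGraph {V : Type*} (G : SimpleGraph V) (s : Set V) : SimpleGraph V where
  Adj u v := G.Adj u v ∧ u ∉ s ∧ v ∉ s
  symm := ⟨fun u v ⟨h, hu, hv⟩ => ⟨h.symm, hv, hu⟩⟩
  loopless := ⟨fun u ⟨h, _, _⟩ => G.loopless.irrefl u h⟩

/-- `G` is a cactus graph: it is connected and each edge belongs to at most one cycle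
(cycles being identified with their edge sets). -/
def IsCactus {V : Type*} (G : SimpleGraph V) : Prop :=
  G.Connected ∧
    ∀ (u v : V) (c : G.Walk u u) (c' : G.Walk v v), c.IsCycle → c'.IsCycle →
      ∀ e, e ∈ c.edges → e ∈ c'.edges → {e' | e' ∈ c.edges} = {e' | e' ∈ c'.edges}

/-- With `T` the induced subgraph of `G` on `V(G) \ {y3,y4,y5}`, the set `T_a` of
vertices of `T` other than `y1, y2` joined to `ya` by a path in `T`. -/
def sideSet {V : Type*} (G : SimpleGraph V) (y1 y2 y3 y4 y5 ya : V) : Set V :=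
  {z | z ∉ ({y1, y2, y3, y4, y5} : Set V) ∧
    (delGraph G {y3, y4, y5}).Reachable z ya}

/-- Swapping the side parts of two vertex covers: if `S1 = {y2,y4,y5} ∪ U1 ∪ U2` and
`S2 = {y1,y3,y4} ∪ V1 ∪ V2` are vertex covers of `G` (with `Ua, Va ⊆ T_a`), then
`W1 = {y3,y4,y5} ∪ U1 ∪ V2` and `W2 = {y1,y2,y3} ∪ V1 ∪ U2` are vertex covers too. -/
lemma delGraph_le {V : Type*} (G : SimpleGraph V) (s : Set V) : delGraph G s ≤ G :=
  fun _ _ h => And.left h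

lemma support_delGraph {V : Type*} {G : SimpleGraph V} {s : Set V} {a b : V}
    (w : (delGraph G s).Walk a b) (hb : b ∉ s) : ∀ x ∈ w.support, x ∉ s := by
  induction w with
  | nil => intro x hx; simp at hx; subst hx; exact hb
  | cons h w ih =>
    intro x hx
    rw [SimpleGraph.Walk.support_cons, List.mem_cons] at hx
    rcases hx with rfl | hx
    · exact (And.right h).1
    · exact ih hb x hx

lemma not_reach {V : Type*} (G : SimpleGraph V) (y1 y2 y3 y4 y5 : V)
    (hcactus : IsCactus G)
    (hne : List.Pairwise Ne [y1, y2, y3, y4, y5])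
    (h14 : G.Adj y1 y4) (h42 : G.Adj y4 y2) (h23 : G.Adj y2 y3)
    (h35 : G.Adj y3 y5) (h51 : G.Adj y5 y1) :
    ¬ (delGraph G {y3, y4, y5}).Reachable y1 y2 := by
  simp only [List.pairwise_cons, List.mem_cons, List.not_mem_nil, or_false,
    List.mem_singleton] at hne
  obtain ⟨h1, h2, h3, h4, -⟩ := hne
  have n12 := h1 y2 (by tauto); have n13 := h1 y3 (by tauto)
  have n14 := h1 y4 (by tauto); have n15 := h1 y5 (by tauto)
  have n23 := h2 y3 (by tauto); have n24 := h2 y4 (by tauto)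
  have n25 := h2 y5 (by tauto); have n34 := h3 y4 (by tauto)
  have n35 := h3 y5 (by tauto); have n45 := h4 y5 rfl
  intro hr
  obtain ⟨w⟩ := hr
  classical
  set D := delGraph G {y3, y4, y5} with hD
  let p₀ : D.Path y1 y2 := w.toPath
  have hsup : ∀ x ∈ (p₀ : D.Walk y1 y2).support, x ∉ ({y3, y4, y5} : Set V) :=
    support_delGraph _ (by simp [n23, n24, n25])
  have hedge : ∀ e ∈ (p₀ : D.Walk y1 y2).edges, e ∈ G.edgeSet := fun e he =>
    SimpleGraph.edgeSet_mono (delGraph_le G _) ((p₀ : D.Walk y1 y2).edges_subset_edgeSet he)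
  let p : G.Walk y1 y2 := (p₀ : D.Walk y1 y2).transfer G hedge
  have hp : p.IsPath := p₀.2.transfer hedge
  have hpsup : p.support = (p₀ : D.Walk y1 y2).support :=
    SimpleGraph.Walk.support_transfer _ hedge
  have hpedges : p.edges = (p₀ : D.Walk y1 y2).edges :=
    SimpleGraph.Walk.edges_transfer _ hedge
  have hy4sup : y4 ∉ p.support := by
    rw [hpsup]; intro h; exact hsup y4 h (by simp)
  have hy3ed : ∀ x, s(y3, x) ∉ p.edges := by
    intro x hx
    have := SimpleGraph.Walk.fst_mem_support_of_mem_edges p hx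
    rw [hpsup] at this
    exact hsup y3 this (by simp)
  -- the cycle through T
  let p' : G.Walk y4 y2 := SimpleGraph.Walk.cons h14.symm p
  have hp' : p'.IsPath := by
    rw [SimpleGraph.Walk.cons_isPath_iff]; exact ⟨hp, hy4sup⟩
  let c : G.Walk y2 y2 := SimpleGraph.Walk.cons h42.symm p'
  have hc : c.IsCycle := by
    rw [SimpleGraph.Walk.cons_isCycle_iff]
    refine ⟨hp', ?_⟩
    simp only [p', SimpleGraph.Walk.edges_cons, List.mem_cons]
    rintro (h | h)
    · rw [Sym2.eq, Sym2.rel_iff'] at h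
      rcases h with ⟨h, _⟩ | ⟨_, h⟩ <;> simp_all
    · exact hy4sup (SimpleGraph.Walk.snd_mem_support_of_mem_edges p h)
  -- the 5-cycle
  let c' : G.Walk y2 y2 :=
    SimpleGraph.Walk.cons h42.symm (SimpleGraph.Walk.cons h14.symm
      (SimpleGraph.Walk.cons h51.symm (SimpleGraph.Walk.cons h35.symm
        (SimpleGraph.Walk.cons h23.symm SimpleGraph.Walk.nil))))
  have hc' : c'.IsCycle := by
    rw [SimpleGraph.Walk.cons_isCycle_iff]
    constructor
    · simp [SimpleGraph.Walk.isPath_def, n12, n13, n14, n15, n23, n24, n25, n34, n35, n45,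
        n12.symm, n13.symm, n14.symm, n15.symm, n23.symm, n24.symm, n25.symm, n34.symm,
        n35.symm, n45.symm]
    · simp only [SimpleGraph.Walk.edges_cons, SimpleGraph.Walk.edges_nil, List.mem_cons,
        List.not_mem_nil, or_false]
      push_neg
      refine ⟨?_, ?_, ?_, ?_⟩ <;>
        (intro h; rw [Sym2.eq_iff] at h; rcases h with ⟨ha, hb⟩ | ⟨ha, hb⟩ <;> simp_all)
  have heq := hcactus.2 y2 y2 c c' hc hc' s(y2, y4) (by simp [c, p']) (by simp [c'])
  have hmem : s(y5, y3) ∈ c'.edges := by simp [c']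
  have : s(y5, y3) ∈ c.edges := by
    have := heq ▸ (Set.mem_setOf.mpr hmem : s(y5,y3) ∈ {e' | e' ∈ c'.edges})
    exact this
  simp only [c, p', SimpleGraph.Walk.edges_cons, List.mem_cons] at this
  rcases this with h | h | h
  · rw [Sym2.eq_iff] at h; rcases h with ⟨h, _⟩ | ⟨_, h⟩ <;> simp_all
  · rw [Sym2.eq_iff] at h; rcases h with ⟨h, _⟩ | ⟨_, h⟩ <;> simp_all
  · exact hy3ed y5 (by rwa [Sym2.eq_swap] at h)

theorem swap_covers_case_yi3 {V : Type*} (G : SimpleGraph V)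
    (y1 y2 y3 y4 y5 : V)
    (hcactus : IsCactus G)
    (hne : List.Pairwise Ne [y1, y2, y3, y4, y5])
    (h14 : G.Adj y1 y4) (h42 : G.Adj y4 y2) (h23 : G.Adj y2 y3)
    (h35 : G.Adj y3 y5) (h51 : G.Adj y5 y1)
    (h12 : ¬ G.Adj y1 y2)
    (hy3 : ∀ z, G.Adj y3 z → z = y2 ∨ z = y5)
    (hy4 : ∀ z, G.Adj y4 z → z = y1 ∨ z = y2)
    (hy5 : ∀ z, G.Adj y5 z → z = y3 ∨ z = y1)
    (U1 U2 V1 V2 : Set V)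
    (hU1 : U1 ⊆ sideSet G y1 y2 y3 y4 y5 y1) (hU2 : U2 ⊆ sideSet G y1 y2 y3 y4 y5 y2)
    (hV1 : V1 ⊆ sideSet G y1 y2 y3 y4 y5 y1) (hV2 : V2 ⊆ sideSet G y1 y2 y3 y4 y5 y2)
    (hS1 : IsVC G (({y2, y4, y5} : Set V) ∪ U1 ∪ U2))
    (hS2 : IsVC G (({y1, y3, y4} : Set V) ∪ V1 ∪ V2)) :
    IsVC G (({y3, y4, y5} : Set V) ∪ U1 ∪ V2) ∧
      IsVC G (({y1, y2, y3} : Set V) ∪ V1 ∪ U2) := by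
  have hnr := not_reach G y1 y2 y3 y4 y5 hcactus hne h14 h42 h23 h35 h51
  simp only [List.pairwise_cons, List.mem_cons, List.not_mem_nil, or_false,
    List.mem_singleton] at hne
  obtain ⟨h1, h2, h3, h4, -⟩ := hne
  have n12 := h1 y2 (by tauto); have n13 := h1 y3 (by tauto)
  have n14 := h1 y4 (by tauto); have n15 := h1 y5 (by tauto)
  have n23 := h2 y3 (by tauto); have n24 := h2 y4 (by tauto)
  have n25 := h2 y5 (by tauto); have n34 := h3 y4 (by tauto)
  have n35 := h3 y5 (by tauto); have n45 := h4 y5 rfl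
  set D := delGraph G {y3, y4, y5} with hDdef
  -- incompatibility of the two sides
  have incompat : ∀ z : V, D.Reachable z y1 → D.Reachable z y2 → False := fun z r1 r2 =>
    hnr (r1.symm.trans r2)
  have sideU1 : ∀ z ∈ U1, (z ≠ y1 ∧ z ≠ y2 ∧ z ≠ y3 ∧ z ≠ y4 ∧ z ≠ y5) ∧ D.Reachable z y1 := by
    intro z hz
    obtain ⟨hn, hr⟩ := hU1 hz
    refine ⟨?_, hr⟩
    simp only [Set.mem_insert_iff, Set.mem_singleton_iff] at hn
    push_neg at hn
    exact hn
  have sideU2 : ∀ z ∈ U2, (z ≠ y1 ∧ z ≠ y2 ∧ z ≠ y3 ∧ z ≠ y4 ∧ z ≠ y5) ∧ D.Reachable z y2 := by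
    intro z hz
    obtain ⟨hn, hr⟩ := hU2 hz
    refine ⟨?_, hr⟩
    simp only [Set.mem_insert_iff, Set.mem_singleton_iff] at hn
    push_neg at hn
    exact hn
  have sideV1 : ∀ z ∈ V1, (z ≠ y1 ∧ z ≠ y2 ∧ z ≠ y3 ∧ z ≠ y4 ∧ z ≠ y5) ∧ D.Reachable z y1 := by
    intro z hz
    obtain ⟨hn, hr⟩ := hV1 hz
    refine ⟨?_, hr⟩
    simp only [Set.mem_insert_iff, Set.mem_singleton_iff] at hn
    push_neg at hn
    exact hn
  have sideV2 : ∀ z ∈ V2, (z ≠ y1 ∧ z ≠ y2 ∧ z ≠ y3 ∧ z ≠ y4 ∧ z ≠ y5) ∧ D.Reachable z y2 := by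
    intro z hz
    obtain ⟨hn, hr⟩ := hV2 hz
    refine ⟨?_, hr⟩
    simp only [Set.mem_insert_iff, Set.mem_singleton_iff] at hn
    push_neg at hn
    exact hn
  have key : ∀ u v, G.Adj u v →
      ((u = y3 ∨ u = y4 ∨ u = y5 ∨ u ∈ U1 ∨ u ∈ V2) ∨
        (v = y3 ∨ v = y4 ∨ v = y5 ∨ v ∈ U1 ∨ v ∈ V2)) ∧
      ((u = y1 ∨ u = y2 ∨ u = y3 ∨ u ∈ V1 ∨ u ∈ U2) ∨
        (v = y1 ∨ v = y2 ∨ v = y3 ∨ v ∈ V1 ∨ v ∈ U2)) := by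
    have W1_U1 : ∀ {x}, x ∈ U1 → (x = y3 ∨ x = y4 ∨ x = y5 ∨ x ∈ U1 ∨ x ∈ V2) :=
      fun hx => Or.inr (Or.inr (Or.inr (Or.inl hx)))
    have W1_V2 : ∀ {x}, x ∈ V2 → (x = y3 ∨ x = y4 ∨ x = y5 ∨ x ∈ U1 ∨ x ∈ V2) :=
      fun hx => Or.inr (Or.inr (Or.inr (Or.inr hx)))
    have W2_V1 : ∀ {x}, x ∈ V1 → (x = y1 ∨ x = y2 ∨ x = y3 ∨ x ∈ V1 ∨ x ∈ U2) :=
      fun hx => Or.inr (Or.inr (Or.inr (Or.inl hx)))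
    have W2_U2 : ∀ {x}, x ∈ U2 → (x = y1 ∨ x = y2 ∨ x = y3 ∨ x ∈ V1 ∨ x ∈ U2) :=
      fun hx => Or.inr (Or.inr (Or.inr (Or.inr hx)))
    intro u v huv
    by_cases hu3 : u = y3 ∨ u = y4 ∨ u = y5
    · refine ⟨Or.inl ?_, ?_⟩
      · rcases hu3 with h | h | h
        exacts [Or.inl h, Or.inr (Or.inl h), Or.inr (Or.inr (Or.inl h))]
      · rcases hu3 with rfl | rfl | rfl
        · exact Or.inl (Or.inr (Or.inr (Or.inl rfl)))
        · rcases hy4 v huv with rfl | rfl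
          · exact Or.inr (Or.inl rfl)
          · exact Or.inr (Or.inr (Or.inl rfl))
        · rcases hy5 v huv with rfl | rfl
          · exact Or.inr (Or.inr (Or.inr (Or.inl rfl)))
          · exact Or.inr (Or.inl rfl)
    by_cases hv3 : v = y3 ∨ v = y4 ∨ v = y5
    · refine ⟨Or.inr ?_, ?_⟩
      · rcases hv3 with h | h | h
        exacts [Or.inl h, Or.inr (Or.inl h), Or.inr (Or.inr (Or.inl h))]
      · rcases hv3 with rfl | rfl | rfl
        · exact Or.inr (Or.inr (Or.inr (Or.inl rfl)))
        · rcases hy4 u huv.symm with rfl | rfl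
          · exact Or.inl (Or.inl rfl)
          · exact Or.inl (Or.inr (Or.inl rfl))
        · rcases hy5 u huv.symm with rfl | rfl
          · exact Or.inl (Or.inr (Or.inr (Or.inl rfl)))
          · exact Or.inl (Or.inl rfl)
    push_neg at hu3 hv3
    have hadjD : D.Adj u v :=
      show G.Adj u v ∧ u ∉ ({y3, y4, y5} : Set V) ∧ v ∉ ({y3, y4, y5} : Set V) from
      ⟨huv, by simp only [Set.mem_insert_iff, Set.mem_singleton_iff]; tauto,
        by simp only [Set.mem_insert_iff, Set.mem_singleton_iff]; tauto⟩
    have ruv : D.Reachable u v := hadjD.reachable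
    have hS1uv := hS1 huv
    have hS2uv := hS2 huv
    simp only [Set.mem_union, Set.mem_insert_iff, Set.mem_singleton_iff] at hS1uv hS2uv
    by_cases hu1 : u = y1
    · subst u
      have hv2 : v ≠ y2 := fun h => h12 (h ▸ huv)
      have hnU1 : y1 ∉ U1 := fun h => (sideU1 _ h).1.1 rfl
      have hnU2 : y1 ∉ U2 := fun h => (sideU2 _ h).1.1 rfl
      have hnvU2 : v ∉ U2 := fun h => incompat v ruv.symm (sideU2 _ h).2
      have hvU1 : v ∈ U1 := by
        rcases hS1uv with (((h | h | h) | h) | h) | (((h | h | h) | h) | h)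
        exacts [absurd h n12, absurd h n14, absurd h n15, absurd h hnU1, absurd h hnU2,
          absurd h hv2, absurd h hv3.2.1, absurd h hv3.2.2, h, absurd h hnvU2]
      exact ⟨Or.inr (W1_U1 hvU1), Or.inl (Or.inl rfl)⟩
    by_cases hv1 : v = y1
    · subst v
      have hu2 : u ≠ y2 := fun h => h12 (G.adj_symm (h ▸ huv))
      have hnU1 : y1 ∉ U1 := fun h => (sideU1 _ h).1.1 rfl
      have hnU2 : y1 ∉ U2 := fun h => (sideU2 _ h).1.1 rfl
      have hnuU2 : u ∉ U2 := fun h => incompat u ruv (sideU2 _ h).2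
      have huU1 : u ∈ U1 := by
        rcases hS1uv with (((h | h | h) | h) | h) | (((h | h | h) | h) | h)
        exacts [absurd h hu2, absurd h hu3.2.1, absurd h hu3.2.2, h, absurd h hnuU2,
          absurd h n12, absurd h n14, absurd h n15, absurd h hnU1, absurd h hnU2]
      exact ⟨Or.inl (W1_U1 huU1), Or.inr (Or.inl rfl)⟩
    by_cases hu2 : u = y2
    · subst u
      have hnV1 : y2 ∉ V1 := fun h => (sideV1 _ h).1.2.1 rfl
      have hnV2 : y2 ∉ V2 := fun h => (sideV2 _ h).1.2.1 rfl
      have hnvV1 : v ∉ V1 := fun h => incompat v (sideV1 _ h).2 ruv.symm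
      have hvV2 : v ∈ V2 := by
        rcases hS2uv with (((h | h | h) | h) | h) | (((h | h | h) | h) | h)
        exacts [absurd h.symm n12, absurd h n23, absurd h n24, absurd h hnV1, absurd h hnV2,
          absurd h hv1, absurd h hv3.1, absurd h hv3.2.1, absurd h hnvV1, h]
      exact ⟨Or.inr (W1_V2 hvV2), Or.inl (Or.inr (Or.inl rfl))⟩
    by_cases hv2 : v = y2
    · subst v
      have hnV1 : y2 ∉ V1 := fun h => (sideV1 _ h).1.2.1 rfl
      have hnV2 : y2 ∉ V2 := fun h => (sideV2 _ h).1.2.1 rfl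
      have hnuV1 : u ∉ V1 := fun h => incompat u (sideV1 _ h).2 ruv
      have huV2 : u ∈ V2 := by
        rcases hS2uv with (((h | h | h) | h) | h) | (((h | h | h) | h) | h)
        exacts [absurd h hu1, absurd h hu3.1, absurd h hu3.2.1, absurd h hnuV1, h,
          absurd h.symm n12, absurd h n23, absurd h n24, absurd h hnV1, absurd h hnV2]
      exact ⟨Or.inl (W1_V2 huV2), Or.inr (Or.inr (Or.inl rfl))⟩
    -- generic case: u, v outside the five special vertices
    have m1 : (u ∈ U1 ∨ u ∈ U2) ∨ (v ∈ U1 ∨ v ∈ U2) := by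
      rcases hS1uv with (((h | h | h) | h) | h) | (((h | h | h) | h) | h)
      exacts [absurd h hu2, absurd h hu3.2.1, absurd h hu3.2.2,
        Or.inl (Or.inl h), Or.inl (Or.inr h),
        absurd h hv2, absurd h hv3.2.1, absurd h hv3.2.2,
        Or.inr (Or.inl h), Or.inr (Or.inr h)]
    have m2 : (u ∈ V1 ∨ u ∈ V2) ∨ (v ∈ V1 ∨ v ∈ V2) := by
      rcases hS2uv with (((h | h | h) | h) | h) | (((h | h | h) | h) | h)
      exacts [absurd h hu1, absurd h hu3.1, absurd h hu3.2.1,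
        Or.inl (Or.inl h), Or.inl (Or.inr h),
        absurd h hv1, absurd h hv3.1, absurd h hv3.2.1,
        Or.inr (Or.inl h), Or.inr (Or.inr h)]
    have c1 : (u ∈ U1 ∨ v ∈ U1 ∨ u ∈ V1 ∨ v ∈ V1) →
        (u ∈ U2 ∨ v ∈ U2 ∨ u ∈ V2 ∨ v ∈ V2) → False := by
      intro hA hB
      have hru1 : D.Reachable u y1 := by
        rcases hA with h | h | h | h
        exacts [(sideU1 _ h).2, ruv.trans (sideU1 _ h).2, (sideV1 _ h).2,
          ruv.trans (sideV1 _ h).2]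
      have hru2 : D.Reachable u y2 := by
        rcases hB with h | h | h | h
        exacts [(sideU2 _ h).2, ruv.trans (sideU2 _ h).2, (sideV2 _ h).2,
          ruv.trans (sideV2 _ h).2]
      exact incompat u hru1 hru2
    rcases m1 with (h | h) | (h | h)
    · rcases m2 with (h2 | h2) | (h2 | h2)
      · exact ⟨Or.inl (W1_U1 h), Or.inl (W2_V1 h2)⟩
      · exact (c1 (Or.inl h) (Or.inr (Or.inr (Or.inl h2)))).elim
      · exact ⟨Or.inl (W1_U1 h), Or.inr (W2_V1 h2)⟩
      · exact (c1 (Or.inl h) (Or.inr (Or.inr (Or.inr h2)))).elim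
    · rcases m2 with (h2 | h2) | (h2 | h2)
      · exact (c1 (Or.inr (Or.inr (Or.inl h2))) (Or.inl h)).elim
      · exact ⟨Or.inl (W1_V2 h2), Or.inl (W2_U2 h)⟩
      · exact (c1 (Or.inr (Or.inr (Or.inr h2))) (Or.inl h)).elim
      · exact ⟨Or.inr (W1_V2 h2), Or.inl (W2_U2 h)⟩
    · rcases m2 with (h2 | h2) | (h2 | h2)
      · exact ⟨Or.inr (W1_U1 h), Or.inl (W2_V1 h2)⟩
      · exact (c1 (Or.inr (Or.inl h)) (Or.inr (Or.inr (Or.inl h2)))).elim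
      · exact ⟨Or.inr (W1_U1 h), Or.inr (W2_V1 h2)⟩
      · exact (c1 (Or.inr (Or.inl h)) (Or.inr (Or.inr (Or.inr h2)))).elim
    · rcases m2 with (h2 | h2) | (h2 | h2)
      · exact (c1 (Or.inr (Or.inr (Or.inl h2))) (Or.inr (Or.inl h))).elim
      · exact ⟨Or.inl (W1_V2 h2), Or.inr (W2_U2 h)⟩
      · exact (c1 (Or.inr (Or.inr (Or.inr h2))) (Or.inr (Or.inl h))).elim
      · exact ⟨Or.inr (W1_V2 h2), Or.inr (W2_U2 h)⟩
  constructor <;> intro u v huv <;>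
    simp only [Set.mem_union, Set.mem_insert_iff, Set.mem_singleton_iff]
  · have k := (key u v huv).1
    rcases k with (h | h | h | h | h) | (h | h | h | h | h)
    exacts [Or.inl (Or.inl (Or.inl (Or.inl h))), Or.inl (Or.inl (Or.inl (Or.inr (Or.inl h)))),
      Or.inl (Or.inl (Or.inl (Or.inr (Or.inr h)))), Or.inl (Or.inl (Or.inr h)),
      Or.inl (Or.inr h),
      Or.inr (Or.inl (Or.inl (Or.inl h))), Or.inr (Or.inl (Or.inl (Or.inr (Or.inl h)))),
      Or.inr (Or.inl (Or.inl (Or.inr (Or.inr h)))), Or.inr (Or.inl (Or.inr h)),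
      Or.inr (Or.inr h)]
  · have k := (key u v huv).2
    rcases k with (h | h | h | h | h) | (h | h | h | h | h)
    exacts [Or.inl (Or.inl (Or.inl (Or.inl h))), Or.inl (Or.inl (Or.inl (Or.inr (Or.inl h)))),
      Or.inl (Or.inl (Or.inl (Or.inr (Or.inr h)))), Or.inl (Or.inl (Or.inr h)),
      Or.inl (Or.inr h),
      Or.inr (Or.inl (Or.inl (Or.inl h))), Or.inr (Or.inl (Or.inl (Or.inr (Or.inl h)))),
      Or.inr (Or.inl (Or.inl (Or.inr (Or.inr h)))), Or.inr (Or.inl (Or.inr h)),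
      Or.inr (Or.inr h)]
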